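/- Let V be a finite-dimensional Gel'fand–Dorfman bialgebra over ℂ such that every element of V is a finite sum of products y∘z with y, z ∈ V (i.e. V is spanned by {y∘z : y,z ∈ V}). Let α : V×V → ℂ[λ] be a bilinear map into polynomials in λ satisfying, for all a,b,c ∈ V and λ,μ ∈ ℂ: (S) α(a,b)(λ) = −α(b,a)(−λ), and (C) λ α(a, c∘b)(λ) + μ α(a, b∗c)(λ) + α(a,[c,b])(λ) − μ α(b, c∘a)(μ) − λ α(b, a∗c)(μ) − α(b,[c,a])(μ) = (−λ−μ) α(b∘a, c)(λ+μ) + λ α(a∗b, c)(λ+μ) + α([b,a], c)(λ+μ). Then there exist bilinear forms α_0, α_1, α_2, α_3 : V×V → ℂ with α(a,b)(λ) = Σ_{i=0}^3 λ^i α_i(a,b) for all a,b ∈ V and λ ∈ ℂ (in particular every α(a,b) has degree at most 3 in λ), and the identities (I1)–(I8) hold for all a, b, c ∈ V. -/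

import Mathlib

open Polynomial

set_option maxHeartbeats 16000000


/-- Let `V` be a finite-dimensional Gel'fand–Dorfman bialgebra over `ℂ`
in which every element is a finite sum of products `y∘z`.  Let `α : V×V → ℂ[λ]` be a
bilinear map into polynomials satisfying (S) and (C).  Then there are bilinear forms
`α_0, α_1, α_2, α_3 : V×V → ℂ` with `α(a,b)(λ) = Σ_{i=0}^3 λ^i α_i(a,b)`, and the
identities (I1)–(I8) hold. -/
theorem stmt_2 {V : Type*} [AddCommGroup V] [Module ℂ V] [FiniteDimensional ℂ V]
    (circ br : V →ₗ[ℂ] V →ₗ[ℂ] V)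
    -- Novikov algebra axioms for `∘ = circ`
    (hNov1 : ∀ a b c : V, circ (circ a b) c - circ a (circ b c)
      = circ (circ b a) c - circ b (circ a c))
    (hNov2 : ∀ a b c : V, circ (circ a b) c = circ (circ a c) b)
    -- Lie algebra axioms for `[·,·] = br`
    (hSkew : ∀ a b : V, br a b = - br b a)
    (hJacobi : ∀ a b c : V, br (br a b) c + br (br b c) a + br (br c a) b = 0)
    -- compatibility condition of the Gel'fand–Dorfman bialgebra
    (hCompat : ∀ a b c : V, br (circ a b) c - br (circ a c) b + circ (br a b) c
      - circ (br a c) b - circ a (br b c) = 0)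
    -- every element of `V` is a finite sum of products `y ∘ z`
    (hspan : AddSubmonoid.closure {x : V | ∃ u v : V, circ u v = x} = ⊤)
    (α : V →ₗ[ℂ] V →ₗ[ℂ] Polynomial ℂ)
    -- condition (S)
    (hS : ∀ (a b : V) (l : ℂ), (α a b).eval l = - (α b a).eval (-l))
    -- condition (C)
    (hC : ∀ (a b c : V) (l m : ℂ),
      l * (α a (circ c b)).eval l
        + m * (α a (circ b c + circ c b)).eval l
        + (α a (br c b)).eval l
        - m * (α b (circ c a)).eval m
        - l * (α b (circ a c + circ c a)).eval m
        - (α b (br c a)).eval m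
      = (-l - m) * (α (circ b a) c).eval (l + m)
        + l * (α (circ a b + circ b a) c).eval (l + m)
        + (α (br b a) c).eval (l + m)) :
    ∃ α0 α1 α2 α3 : V →ₗ[ℂ] V →ₗ[ℂ] ℂ,
      (∀ (a b : V) (l : ℂ),
        (α a b).eval l = α0 a b + l * α1 a b + l ^ 2 * α2 a b + l ^ 3 * α3 a b)
      -- (I1): `α_i(a,b) = (−1)^{i+1} α_i(b,a)` for `i = 0, 1, 2, 3`
      ∧ (∀ a b : V, α0 a b = - α0 b a)
      ∧ (∀ a b : V, α1 a b = α1 b a)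
      ∧ (∀ a b : V, α2 a b = - α2 b a)
      ∧ (∀ a b : V, α3 a b = α3 b a)
      -- (I2)
      ∧ (∀ a b c : V, α3 a (circ c b) = α3 (circ a b) c ∧ α3 (circ a b) c = α3 (circ b a) c)
      -- (I3)
      ∧ (∀ a b c : V, α2 a (circ c b) + α3 a (br c b) = α2 (circ a b) c + α3 (br b a) c)
      -- (I4)
      ∧ (∀ a b c : V, α2 a (circ b c + circ c b) + α2 (circ b a) c
          = 2 * α2 (circ a b) c + 3 * α3 (br b a) c)
      -- (I5)
      ∧ (∀ a b c : V, α1 a (circ c b) + α2 a (br c b) = α1 (circ a b) c + α2 (br b a) c)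
      -- (I6)
      ∧ (∀ a b c : V, α1 a (circ b c + circ c b) - α1 b (circ a c + circ c a)
          = - α1 (circ b a) c + α1 (circ a b) c + 2 * α2 (br b a) c)
      -- (I7)
      ∧ (∀ a b c : V, α0 a (circ c b) + α1 a (br c b) - α0 b (circ a c + circ c a)
          = α0 (circ a b) c + α1 (br b a) c)
      -- (I8)
      ∧ (∀ a b c : V, α0 a (br c b) - α0 b (br c a) = α0 (br b a) c) := by
    classical
  set β : ℕ → (V →ₗ[ℂ] V →ₗ[ℂ] ℂ) := fun k => LinearMap.compr₂ α (Polynomial.lcoeff ℂ k)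
    with hβdef
  have hβapp : ∀ (k : ℕ) (x y : V), β k x y = (α x y).coeff k := fun _ _ _ => rfl
  -- global degree bound
  obtain ⟨N, hN⟩ : ∃ N : ℕ, ∀ k, N < k → β k = 0 := by
    have bV := Module.finBasis ℂ V
    refine ⟨(Finset.univ : Finset (Fin (Module.finrank ℂ V) × Fin (Module.finrank ℂ V))).sup
      (fun p => (α (bV p.1) (bV p.2)).natDegree), fun k hk => ?_⟩
    apply bV.ext; intro i
    rw [LinearMap.zero_apply]
    apply bV.ext; intro j
    rw [LinearMap.zero_apply, hβapp]
    apply Polynomial.coeff_eq_zero_of_natDegree_lt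
    refine lt_of_le_of_lt ?_ hk
    have := Finset.le_sup (f := fun p : Fin (Module.finrank ℂ V) × Fin (Module.finrank ℂ V) =>
      (α (bV p.1) (bV p.2)).natDegree) (Finset.mem_univ (i,j))
    exact this
  -- key coefficient identity from (C)
  have hE : ∀ (x y z : V) (i j : ℕ),
      ((((j+2)+(i+1)).choose (i+1) : ℂ)) * β ((j+2)+(i+1)) (circ y x) z
        + ((((j+1)+(i+2)).choose (i+2) : ℂ)) * β ((j+1)+(i+2)) (circ y x) z
      = ((((j+2)+(i+1)).choose (i+1) : ℂ)) * β ((j+2)+(i+1)) (circ x y + circ y x) z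
        + ((((j+2)+(i+2)).choose (i+2) : ℂ)) * β ((j+2)+(i+2)) (br y x) z := by
    intro x y z i j
    have step1 : ∀ m : ℂ,
        X * (α x (circ z y)) + C m * (α x (circ y z + circ z y)) + (α x (br z y))
          - C (m * (α y (circ z x)).eval m + (α y (br z x)).eval m)
          - C ((α y (circ x z + circ z x)).eval m) * X
        = (-X - C m) * taylor m (α (circ y x) z)
          + X * taylor m (α (circ x y + circ y x) z) + taylor m (α (br y x) z) := by
      intro m
      apply Polynomial.funext; intro l
      have h := hC x y z l m
      simp only [eval_add, eval_sub, eval_mul, eval_neg, eval_C, eval_X, taylor_eval]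
      linear_combination h
    have step2 :
        C ((α x (circ z y)).coeff (i+1) + (α x (br z y)).coeff (i+2))
          + C ((α x (circ y z + circ z y)).coeff (i+2)) * X
          + hasseDeriv (i+1) (α (circ y x) z) + X * hasseDeriv (i+2) (α (circ y x) z)
          - hasseDeriv (i+1) (α (circ x y + circ y x) z)
          - hasseDeriv (i+2) (α (br y x) z) = 0 := by
      apply Polynomial.funext; intro m
      have h := congrArg (fun p : Polynomial ℂ => p.coeff (i+2)) (step1 m)
      simp only [coeff_add, coeff_sub, coeff_neg, sub_mul, neg_mul, coeff_C_mul,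
        show (i:ℕ)+2 = (i+1)+1 from rfl, coeff_X_mul, taylor_coeff, coeff_C,
        if_neg (Nat.succ_ne_zero (i+1)), coeff_X,
        if_neg (show ¬(1 = i+1+1) by omega), mul_zero, add_zero, zero_sub, sub_zero] at h
      rw [eval_zero]
      simp only [eval_add, eval_sub, eval_mul, eval_neg, eval_C, eval_X]
      rw [show i+1+1 = i+2 from rfl] at h
      linear_combination h
    have h := congrArg (fun p : Polynomial ℂ => p.coeff (j+2)) step2
    simp only [coeff_add, coeff_sub, coeff_C_mul, coeff_C,
      if_neg (Nat.succ_ne_zero (j+1)), coeff_X,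
      if_neg (show ¬(1 = j+2) by omega), mul_zero,
      show (j:ℕ)+2 = (j+1)+1 from rfl, coeff_X_mul,
      hasseDeriv_coeff, coeff_zero, zero_add, add_zero] at h
    rw [show j+1+1 = j+2 from rfl] at h
    simp only [hβapp]
    linear_combination h
  -- descent step
  have hstep : ∀ k : ℕ, 4 ≤ k → β (k+1) = 0 → β k = 0 := by
    intro k hk4 h1
    obtain ⟨k', rfl⟩ : ∃ k', k = k'+4 := ⟨k-4, by omega⟩
    have h5 : β (k'+5) = 0 := by rw [show k'+5 = k'+4+1 from rfl]; exact h1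
    have hprod : ∀ x y z : V, β (k'+4) (circ y x) z = 0 := by
      intro x y z
      have e1 := hE x y z 0 (k'+1)
      have e2 := hE x y z 1 k'
      rw [show k'+1+2+(0+1) = k'+4 by omega, show k'+1+1+(0+2) = k'+4 by omega,
        show k'+1+2+(0+2) = k'+5 by omega, show (0:ℕ)+1 = 1 by omega,
        show (0:ℕ)+2 = 2 by omega] at e1
      rw [show k'+2+(1+1) = k'+4 by omega, show k'+1+(1+2) = k'+4 by omega,
        show k'+2+(1+2) = k'+5 by omega, show (1:ℕ)+1 = 2 by omega,
        show (1:ℕ)+2 = 3 by omega] at e2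
      have hr : β (k'+5) (br y x) z = 0 := by rw [h5]; rfl
      have hq : β (k'+4) (circ x y + circ y x) z
          = β (k'+4) (circ x y) z + β (k'+4) (circ y x) z := by
        rw [map_add, LinearMap.add_apply]
      rw [hq] at e1 e2
      have hA : ((k'+4).choose 1 : ℂ) = (k' : ℂ) + 4 := by
        rw [Nat.choose_one_right]; push_cast; ring
      have hB2 : ((k'+4).choose 2 : ℂ) * 2 = ((k' : ℂ)+4) * ((k' : ℂ)+3) := by
        have h := Nat.choose_succ_right_eq (k'+4) 1
        rw [show k'+4-1 = k'+3 by omega, Nat.choose_one_right] at h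
        have h2 := congrArg (Nat.cast : ℕ → ℂ) h
        push_cast at h2
        linear_combination h2
      have hD3 : ((k'+4).choose 3 : ℂ) * 3 = ((k'+4).choose 2 : ℂ) * ((k' : ℂ)+2) := by
        have h := Nat.choose_succ_right_eq (k'+4) 2
        rw [show k'+4-2 = k'+2 by omega] at h
        have h2 := congrArg (Nat.cast : ℕ → ℂ) h
        push_cast at h2
        linear_combination h2
      set A := ((k'+4).choose 1 : ℂ)
      set B := ((k'+4).choose 2 : ℂ)
      set D := ((k'+4).choose 3 : ℂ)
      set B' := ((k'+5).choose 2 : ℂ)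
      set D' := ((k'+5).choose 3 : ℂ)
      set u := β (k'+4) (circ y x) z
      set q := β (k'+4) (circ x y) z
      set r := β (k'+5) (br y x) z
      have hu : (B*B - A*D) * u = 0 := by
        linear_combination B*e1 - A*e2 + (B*B' - A*D')*hr
      have h6 : 6*(B*B - A*D) = B * ((k':ℂ)+4) * ((k':ℂ)+5) := by
        linear_combination 3*B*hB2 - 2*((k':ℂ)+4)*hD3 - 6*D*hA
      have hBne : B ≠ 0 := by
        simp only [B, Ne, Nat.cast_eq_zero]
        exact (Nat.choose_pos (by omega)).ne'
      have h44 : ((k':ℂ)+4) ≠ 0 := by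
        have : ((k'+4 : ℕ):ℂ) ≠ 0 := Nat.cast_ne_zero.mpr (by omega)
        push_cast at this; exact this
      have h55 : ((k':ℂ)+5) ≠ 0 := by
        have : ((k'+5 : ℕ):ℂ) ≠ 0 := Nat.cast_ne_zero.mpr (by omega)
        push_cast at this; exact this
      have hfactor : (B*B - A*D) ≠ 0 := by
        intro h0
        rw [h0, mul_zero] at h6
        exact (mul_ne_zero (mul_ne_zero hBne h44) h55) h6.symm
      exact (mul_eq_zero.mp hu).resolve_left hfactor
    have hzero2 : ∀ w z : V, β (k'+4) w z = 0 := by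
      intro w z
      have hw : w ∈ AddSubmonoid.closure {x : V | ∃ u v : V, circ u v = x} := by
        rw [hspan]; trivial
      induction hw using AddSubmonoid.closure_induction with
      | mem u hu => obtain ⟨u1, u2, rfl⟩ := hu; exact hprod u2 u1 z
      | zero => simp
      | add u v _ _ hu hv => rw [map_add, LinearMap.add_apply, hu, hv, add_zero]
    apply LinearMap.ext; intro w
    apply LinearMap.ext; intro z
    rw [LinearMap.zero_apply, LinearMap.zero_apply]
    exact hzero2 w z
  -- all coefficients ≥ 4 vanish
  have hzero : ∀ k, 4 ≤ k → β k = 0 := by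
    have main : ∀ d k, 4 ≤ k → N + 1 ≤ k + d → β k = 0 := by
      intro d
      induction d with
      | zero => intro k _ hbd; exact hN k (by omega)
      | succ d ih =>
        intro k hk4 hbd
        by_cases hk : N < k
        · exact hN k hk
        · exact hstep k hk4 (ih (k+1) (by omega) (by omega))
    intro k hk; exact main (N+1) k hk (by omega)
  -- the evaluation formula
  have hEval : ∀ (x y : V) (l : ℂ),
      (α x y).eval l = β 0 x y + l * β 1 x y + l^2 * β 2 x y + l^3 * β 3 x y := by
    intro x y l
    have hdeg : (α x y).natDegree < 4 := by
      have h3 : (α x y).natDegree ≤ 3 := by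
        apply Polynomial.natDegree_le_iff_coeff_eq_zero.mpr
        intro M hM
        have h := hzero M (by omega)
        have : β M x y = 0 := by rw [h]; rfl
        rw [hβapp] at this; exact this
      omega
    rw [Polynomial.eval_eq_sum_range' hdeg]
    simp only [Finset.sum_range_succ, Finset.sum_range_zero, hβapp]
    ring
  -- symmetry relations (I1)
  have hS' : ∀ (x y : V) (l : ℂ),
      β 0 x y + l * β 1 x y + l^2 * β 2 x y + l^3 * β 3 x y
      = -(β 0 y x + (-l) * β 1 y x + (-l)^2 * β 2 y x + (-l)^3 * β 3 y x) := by
    intro x y l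
    have h := hS x y l
    rw [hEval, hEval] at h
    exact h
  have hI10 : ∀ x y : V, β 0 x y = - β 0 y x := by
    intro x y; linear_combination hS' x y 0
  have hI11 : ∀ x y : V, β 1 x y = β 1 y x := by
    intro x y
    linear_combination hS' x y 1 - ((1:ℂ)/3) * hS' x y (-1) - ((1:ℂ)/6) * hS' x y 2
      - ((1:ℂ)/2) * hS' x y 0
  have hI12 : ∀ x y : V, β 2 x y = - β 2 y x := by
    intro x y
    linear_combination ((1:ℂ)/2) * hS' x y 1 + ((1:ℂ)/2) * hS' x y (-1) - hS' x y 0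
  have hI13 : ∀ x y : V, β 3 x y = β 3 y x := by
    intro x y
    linear_combination ((1:ℂ)/6) * hS' x y 2 + ((1:ℂ)/2) * hS' x y 0
      - ((1:ℂ)/2) * hS' x y 1 - ((1:ℂ)/6) * hS' x y (-1)
  -- expanded form of (C)
  have hC'' : ∀ (x y z : V) (l m : ℂ),
      l * (β 0 x (circ z y) + l * β 1 x (circ z y) + l^2 * β 2 x (circ z y) + l^3 * β 3 x (circ z y))
        + m * ((β 0 x (circ y z) + β 0 x (circ z y)) + l * (β 1 x (circ y z) + β 1 x (circ z y)) + l^2 * (β 2 x (circ y z) + β 2 x (circ z y)) + l^3 * (β 3 x (circ y z) + β 3 x (circ z y)))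
        + (β 0 x (br z y) + l * β 1 x (br z y) + l^2 * β 2 x (br z y) + l^3 * β 3 x (br z y))
        - m * (β 0 y (circ z x) + m * β 1 y (circ z x) + m^2 * β 2 y (circ z x) + m^3 * β 3 y (circ z x))
        - l * ((β 0 y (circ x z) + β 0 y (circ z x)) + m * (β 1 y (circ x z) + β 1 y (circ z x)) + m^2 * (β 2 y (circ x z) + β 2 y (circ z x)) + m^3 * (β 3 y (circ x z) + β 3 y (circ z x)))
        - (β 0 y (br z x) + m * β 1 y (br z x) + m^2 * β 2 y (br z x) + m^3 * β 3 y (br z x))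
      = (-l - m) * (β 0 (circ y x) z + (l+m) * β 1 (circ y x) z + (l+m)^2 * β 2 (circ y x) z + (l+m)^3 * β 3 (circ y x) z)
        + l * ((β 0 (circ x y) z + β 0 (circ y x) z) + (l+m) * (β 1 (circ x y) z + β 1 (circ y x) z) + (l+m)^2 * (β 2 (circ x y) z + β 2 (circ y x) z) + (l+m)^3 * (β 3 (circ x y) z + β 3 (circ y x) z))
        + (β 0 (br y x) z + (l+m) * β 1 (br y x) z + (l+m)^2 * β 2 (br y x) z + (l+m)^3 * β 3 (br y x) z) := by
    intro x y z l m
    have h := hC x y z l m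
    simp only [map_add, LinearMap.add_apply, eval_add, hEval] at h
    linear_combination h
  refine ⟨β 0, β 1, β 2, β 3, hEval, hI10, hI11, hI12, hI13, ?_, ?_, ?_, ?_, ?_, ?_, ?_⟩
  · -- I2
    intro a b c
    constructor
    · -- I2a
      have H0 := hC'' b a c 0 0
      have H1 := hC'' b a c 0 1
      have H2 := hC'' b a c 0 2
      have H3 := hC'' b a c 0 3
      have H4 := hC'' b a c 0 4
      linear_combination ((-1/24:ℂ)) * H0
        + ((1/6:ℂ)) * H1
        + ((-1/4:ℂ)) * H2
        + ((1/6:ℂ)) * H3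
        + ((-1/24:ℂ)) * H4
    · -- I2b
      have H0 := hC'' b a c 0 0
      have H1 := hC'' b a c 0 1
      have H2 := hC'' b a c 0 2
      have H3 := hC'' b a c 1 0
      have H4 := hC'' b a c 1 1
      have H5 := hC'' b a c 1 2
      have H6 := hC'' b a c 2 0
      have H7 := hC'' b a c 2 1
      have H8 := hC'' b a c 2 2
      linear_combination ((1/12:ℂ)) * H0
        + ((-1/6:ℂ)) * H1
        + ((1/12:ℂ)) * H2
        + ((-1/6:ℂ)) * H3
        + ((1/3:ℂ)) * H4
        + ((-1/6:ℂ)) * H5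
        + ((1/12:ℂ)) * H6
        + ((-1/6:ℂ)) * H7
        + ((1/12:ℂ)) * H8
  · -- I3
    intro a b c
    have H0 := hC'' a b c 0 0
    have H1 := hC'' a b c 0 1
    have H2 := hC'' a b c 0 2
    have H3 := hC'' a b c 0 3
    have H4 := hC'' b a c 0 0
    have H5 := hC'' b a c 0 1
    have H6 := hC'' b a c 0 2
    have H7 := hC'' b a c 0 3
    have H8 := hC'' b a c 0 4
    have H9 := hC'' b a c 1 0
    have H10 := hC'' b a c 2 0
    have H11 := hC'' b a c 3 0
    linear_combination ((-1/6:ℂ)) * H0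
      + ((1/2:ℂ)) * H1
      + ((-1/2:ℂ)) * H2
      + ((1/6:ℂ)) * H3
      + ((1/4:ℂ)) * H4
      + ((-3/2:ℂ)) * H5
      + ((2:ℂ)) * H6
      + ((-7/6:ℂ)) * H7
      + ((1/4:ℂ)) * H8
      + ((1/2:ℂ)) * H9
      + ((-1/2:ℂ)) * H10
      + ((1/6:ℂ)) * H11
  · -- I4
    intro a b c
    simp only [map_add, LinearMap.add_apply]
    have H0 := hC'' a b c 0 0
    have H1 := hC'' a b c 0 1
    have H2 := hC'' a b c 0 2
    have H3 := hC'' a b c 0 3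
    have H4 := hC'' b a c 0 0
    have H5 := hC'' b a c 0 1
    have H6 := hC'' b a c 0 2
    have H7 := hC'' b a c 0 3
    have H8 := hC'' b a c 1 1
    have H9 := hC'' b a c 1 2
    have H10 := hC'' b a c 1 3
    have H11 := hC'' b a c 2 0
    have H12 := hC'' b a c 2 1
    have H13 := hC'' b a c 2 2
    have H14 := hC'' b a c 3 0
    linear_combination ((-1/2:ℂ)) * H0
      + ((3/2:ℂ)) * H1
      + ((-3/2:ℂ)) * H2
      + ((1/2:ℂ)) * H3
      + ((3/4:ℂ)) * H4
      + ((-3:ℂ)) * H5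
      + ((9/4:ℂ)) * H6
      + ((-1/2:ℂ)) * H7
      + ((7/2:ℂ)) * H8
      + ((-5/2:ℂ)) * H9
      + ((1/2:ℂ)) * H10
      + ((-5/4:ℂ)) * H11
      + ((-1/2:ℂ)) * H12
      + ((1/4:ℂ)) * H13
      + ((1/2:ℂ)) * H14
  · -- I5
    intro a b c
    have H0 := hC'' a b c 0 0
    have H1 := hC'' a b c 0 1
    have H2 := hC'' a b c 0 2
    have H3 := hC'' a b c 0 3
    have H4 := hC'' b a c 0 0
    have H5 := hC'' b a c 0 1
    have H6 := hC'' b a c 0 2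
    have H7 := hC'' b a c 0 3
    have H8 := hC'' b a c 0 4
    have H9 := hC'' b a c 1 0
    have H10 := hC'' b a c 2 0
    have H11 := hC'' b a c 3 0
    linear_combination ((1:ℂ)) * H0
      + ((-5/2:ℂ)) * H1
      + ((2:ℂ)) * H2
      + ((-1/2:ℂ)) * H3
      + ((-11/24:ℂ)) * H4
      + ((13/3:ℂ)) * H5
      + ((-19/4:ℂ)) * H6
      + ((7/3:ℂ)) * H7
      + ((-11/24:ℂ)) * H8
      + ((-5/2:ℂ)) * H9
      + ((2:ℂ)) * H10
      + ((-1/2:ℂ)) * H11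
  · -- I6
    intro a b c
    simp only [map_add, LinearMap.add_apply]
    have H0 := hC'' a b c 0 0
    have H1 := hC'' a b c 0 1
    have H2 := hC'' a b c 0 2
    have H3 := hC'' a b c 0 3
    have H4 := hC'' b a c 0 0
    have H5 := hC'' b a c 0 1
    have H6 := hC'' b a c 0 2
    have H7 := hC'' b a c 0 3
    have H8 := hC'' b a c 1 0
    have H9 := hC'' b a c 1 1
    have H10 := hC'' b a c 1 2
    have H11 := hC'' b a c 1 3
    have H12 := hC'' b a c 2 0
    have H13 := hC'' b a c 2 1
    have H14 := hC'' b a c 2 2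
    have H15 := hC'' b a c 3 0
    have H16 := hC'' b a c 3 1
    linear_combination ((2:ℂ)) * H0
      + ((-5:ℂ)) * H1
      + ((4:ℂ)) * H2
      + ((-1:ℂ)) * H3
      + ((-11/12:ℂ)) * H4
      + ((13/3:ℂ)) * H5
      + ((-7/4:ℂ)) * H6
      + ((1/3:ℂ)) * H7
      + ((-2/3:ℂ)) * H8
      + ((-6:ℂ)) * H9
      + ((2:ℂ)) * H10
      + ((-1/3:ℂ)) * H11
      + ((9/4:ℂ)) * H12
      + ((2:ℂ)) * H13
      + ((-1/4:ℂ)) * H14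
      + ((-2/3:ℂ)) * H15
      + ((-1/3:ℂ)) * H16
  · -- I7
    intro a b c
    simp only [map_add, LinearMap.add_apply]
    have H0 := hC'' a b c 0 0
    have H1 := hC'' a b c 0 1
    have H2 := hC'' a b c 0 2
    have H3 := hC'' a b c 0 3
    have H4 := hC'' b a c 0 0
    have H5 := hC'' b a c 0 1
    have H6 := hC'' b a c 0 2
    have H7 := hC'' b a c 0 3
    have H8 := hC'' b a c 0 4
    have H9 := hC'' b a c 1 0
    have H10 := hC'' b a c 2 0
    have H11 := hC'' b a c 3 0
    linear_combination ((-11/6:ℂ)) * H0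
      + ((3:ℂ)) * H1
      + ((-3/2:ℂ)) * H2
      + ((1/3:ℂ)) * H3
      + ((1/4:ℂ)) * H4
      + ((-4:ℂ)) * H5
      + ((3:ℂ)) * H6
      + ((-4/3:ℂ)) * H7
      + ((1/4:ℂ)) * H8
      + ((3:ℂ)) * H9
      + ((-3/2:ℂ)) * H10
      + ((1/3:ℂ)) * H11
  · -- I8
    intro a b c
    have H0 := hC'' a b c 0 0
    linear_combination ((1:ℂ)) * H0
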